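/- For n ≥ 3, the difference W_n(x) − |x|²/2 converges to a finite negative constant c(n) as |x| → ∞, with error O(|x|^{2−n}); more precisely there are constants c(n) < 0 and C > 0 such that |W_n(x) − |x|²/2 − c(n)| ≤ C|x|^{2−n} for all |x| ≥ 2. -/
import Mathlib

open MeasureTheory Set Real

noncomputable def ff (n : ℕ) (s : ℝ) : ℝ := (max (s ^ n - 1) 0) ^ ((1:ℝ)/n)

lemma ff_cont (n : ℕ) : Continuous (ff n) := by
  apply Continuous.rpow_const
  · fun_prop
  · intro x; right; positivity

lemma ff_zero (n : ℕ) (hn : 3 ≤ n) {s : ℝ} (h0 : 0 ≤ s) (h1 : s ≤ 1) : ff n s = 0 := by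
  have : s ^ n ≤ 1 := pow_le_one₀ h0 h1
  have hmax : max (s ^ n - 1) 0 = 0 := max_eq_right (by linarith)
  have hne : (1:ℝ)/n ≠ 0 := by
    have : (n:ℝ) ≠ 0 := by positivity
    simp [this]
  show (max (s ^ n - 1) 0) ^ ((1:ℝ)/n) = 0
  rw [hmax, Real.zero_rpow hne]

lemma ff_le (n : ℕ) (hn : 3 ≤ n) {s : ℝ} (hs : 1 ≤ s) : ff n s ≤ s := by
  have hs0 : (0:ℝ) ≤ s := by linarith
  have hnn : (0:ℝ) ≤ max (s ^ n - 1) 0 := le_max_right _ _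
  have hb : max (s ^ n - 1) 0 ≤ s ^ n := by
    have : (0:ℝ) ≤ s ^ n := by positivity
    exact max_le (by linarith) this
  have h1n : (0:ℝ) ≤ 1/n := by positivity
  calc ff n s ≤ (s ^ n) ^ ((1:ℝ)/n) := Real.rpow_le_rpow hnn hb h1n
    _ = s := by
        rw [← Real.rpow_natCast s n, ← Real.rpow_mul hs0]
        rw [mul_one_div_cancel (by positivity : (n:ℝ) ≠ 0), Real.rpow_one]

lemma ff_ge (n : ℕ) (hn : 3 ≤ n) {s : ℝ} (hs : 1 ≤ s) :
    s - s ^ ((1:ℝ) - n) ≤ ff n s := by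
  have hs0 : (0:ℝ) < s := by linarith
  set u : ℝ := s ^ (-(n:ℝ)) with hu
  have hu0 : 0 < u := Real.rpow_pos_of_pos hs0 _
  have hu1 : u ≤ 1 := Real.rpow_le_one_of_one_le_of_nonpos hs (by
    have : (0:ℝ) ≤ n := by positivity
    linarith)
  have hsu : s ^ n * u = 1 := by
    rw [hu, ← Real.rpow_natCast s n, ← Real.rpow_add hs0]
    simp
  have ht : s ^ ((1:ℝ) - n) = s * u := by
    have he : (1:ℝ) - n = 1 + (-(n:ℝ)) := by ring
    rw [hu, he, Real.rpow_add hs0, Real.rpow_one]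
  set a : ℝ := s - s ^ ((1:ℝ) - n) with ha
  have ha0 : 0 ≤ a := by
    rw [ha, ht]
    nlinarith
  have hane : a = s * (1 - u) := by rw [ha, ht]; ring
  have hpow : a ^ n ≤ s ^ n - 1 := by
    have h1u : (0:ℝ) ≤ 1 - u := by linarith
    have h1u' : (1:ℝ) - u ≤ 1 := by linarith
    have hle : (1 - u) ^ n ≤ (1 - u) ^ 1 :=
      pow_le_pow_of_le_one h1u h1u' (by omega)
    have : a ^ n = s ^ n * (1 - u) ^ n := by rw [hane, mul_pow]
    rw [this]
    have hsn : (0:ℝ) ≤ s ^ n := by positivity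
    calc s ^ n * (1 - u) ^ n ≤ s ^ n * (1 - u) :=
          mul_le_mul_of_nonneg_left (by simpa using hle) hsn
      _ = s ^ n - 1 := by rw [mul_sub, mul_one, hsu]
  have hmax : a ^ n ≤ max (s ^ n - 1) 0 := le_trans hpow (le_max_left _ _)
  have h1n : (0:ℝ) ≤ 1/n := by positivity
  have key : (a ^ n) ^ ((1:ℝ)/n) ≤ ff n s :=
    Real.rpow_le_rpow (by positivity) hmax h1n
  have : (a ^ n) ^ ((1:ℝ)/n) = a := by
    rw [← Real.rpow_natCast a n, ← Real.rpow_mul ha0,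
      mul_one_div_cancel (by positivity : (n:ℝ) ≠ 0), Real.rpow_one]
  linarith [key, this.symm.le, this.le]

theorem stmt_1 (n : ℕ) (hn : 3 ≤ n)
    (W : EuclideanSpace ℝ (Fin n) → ℝ)
    (hW : ∀ x, W x = ∫ s in (0:ℝ)..‖x‖, (max (s ^ n - 1) 0) ^ ((1:ℝ)/n)) :
    ∃ c < (0:ℝ), ∃ C > (0:ℝ), ∀ x : EuclideanSpace ℝ (Fin n), 2 ≤ ‖x‖ →
      |W x - ‖x‖ ^ 2 / 2 - c| ≤ C * ‖x‖ ^ ((2:ℝ) - n) := by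
  classical
  set G : ℝ → ℝ := fun s => s - ff n s with hG
  have hGcont : Continuous G := continuous_id.sub (ff_cont n)
  have hexp : (1:ℝ) - n < -1 := by
    have : (3:ℝ) ≤ n := by exact_mod_cast hn
    linarith
  have hGnonneg : ∀ s ∈ Ioi (1:ℝ), 0 ≤ G s := by
    intro s hs
    have := ff_le n hn (le_of_lt hs)
    simp only [hG]; linarith
  have hGle : ∀ s ∈ Ioi (1:ℝ), G s ≤ s ^ ((1:ℝ) - n) := by
    intro s hs
    have := ff_ge n hn (le_of_lt hs)
    simp only [hG]; linarith
  have hrint : IntegrableOn (fun s : ℝ => s ^ ((1:ℝ) - n)) (Ioi 1) :=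
    integrableOn_Ioi_rpow_of_lt hexp one_pos
  have hGint : IntegrableOn G (Ioi 1) := by
    refine Integrable.mono hrint (hGcont.aestronglyMeasurable.restrict) ?_
    filter_upwards [ae_restrict_mem measurableSet_Ioi] with s hs
    have h1 := hGnonneg s hs
    have h2 := hGle s hs
    rw [Real.norm_eq_abs, Real.norm_eq_abs, abs_of_nonneg h1,
      abs_of_nonneg (Real.rpow_nonneg (by simp at hs; linarith) _)]
    exact h2
  set J : ℝ := ∫ s in Ioi (1:ℝ), G s with hJ
  have hJnonneg : 0 ≤ J := setIntegral_nonneg measurableSet_Ioi hGnonneg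
  refine ⟨-(1/2 + J), by linarith, 1, one_pos, ?_⟩
  intro x hx
  set R : ℝ := ‖x‖ with hR
  have hR1 : (1:ℝ) ≤ R := by linarith
  have hR0 : (0:ℝ) < R := by linarith
  -- split J
  have hsplit : J = (∫ s in Ioc (1:ℝ) R, G s) + ∫ s in Ioi R, G s := by
    rw [hJ, ← setIntegral_union (Ioc_disjoint_Ioi le_rfl) measurableSet_Ioi
      (hGint.mono_set Ioc_subset_Ioi_self) (hGint.mono_set (Ioi_subset_Ioi hR1)),
      Ioc_union_Ioi_eq_Ioi hR1]
  -- compute W x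
  have hWx : W x = (R ^ 2 / 2 - 1 / 2) - ∫ s in Ioc (1:ℝ) R, G s := by
    rw [hW x, ← hR]
    have h01 : ∫ s in (0:ℝ)..(1:ℝ), ff n s = 0 := by
      rw [intervalIntegral.integral_of_le zero_le_one]
      apply setIntegral_eq_zero_of_forall_eq_zero
      intro s hs
      exact ff_zero n hn (le_of_lt hs.1) hs.2
    have hadj : (∫ s in (0:ℝ)..(1:ℝ), ff n s) + (∫ s in (1:ℝ)..R, ff n s)
        = ∫ s in (0:ℝ)..R, ff n s :=
      intervalIntegral.integral_add_adjacent_intervals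
        ((ff_cont n).intervalIntegrable _ _) ((ff_cont n).intervalIntegrable _ _)
    have hff : ∀ s, ff n s = s - G s := by intro s; simp [hG]
    have h1R : (∫ s in (1:ℝ)..R, ff n s)
        = (∫ s in (1:ℝ)..R, s) - ∫ s in (1:ℝ)..R, G s := by
      have hcg : (∫ s in (1:ℝ)..R, ff n s) = ∫ s in (1:ℝ)..R, (s - G s) := by
        congr 1; funext s; simp [hG]
      rw [hcg, intervalIntegral.integral_sub
        ((continuous_id').intervalIntegrable _ _) (hGcont.intervalIntegrable _ _)]
    have hid : (∫ s in (1:ℝ)..R, s) = R ^ 2 / 2 - 1 / 2 := by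
      rw [integral_id]; ring
    have hIoc : (∫ s in (1:ℝ)..R, G s) = ∫ s in Ioc (1:ℝ) R, G s :=
      intervalIntegral.integral_of_le hR1
    have : (∫ s in (0:ℝ)..R, ff n s)
        = (R ^ 2 / 2 - 1 / 2) - ∫ s in Ioc (1:ℝ) R, G s := by
      rw [← hadj, h01, zero_add, h1R, hid, hIoc]
    exact this.trans (by ring)
  have hkey : W x - R ^ 2 / 2 - (-(1/2 + J)) = ∫ s in Ioi R, G s := by
    rw [hWx, hsplit]; ring
  rw [hkey]
  have htail_nonneg : 0 ≤ ∫ s in Ioi R, G s :=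
    setIntegral_nonneg measurableSet_Ioi
      (fun s hs => hGnonneg s (lt_of_le_of_lt hR1 hs))
  have htail_le : (∫ s in Ioi R, G s) ≤ ∫ s in Ioi R, s ^ ((1:ℝ) - n) := by
    apply setIntegral_mono_on (hGint.mono_set (Ioi_subset_Ioi hR1))
      (integrableOn_Ioi_rpow_of_lt hexp hR0) measurableSet_Ioi
    intro s hs
    exact hGle s (lt_of_le_of_lt hR1 hs)
  have hval : (∫ s in Ioi R, s ^ ((1:ℝ) - n)) = -R ^ ((1:ℝ) - n + 1) / ((1:ℝ) - n + 1) :=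
    integral_Ioi_rpow_of_lt hexp hR0
  have h2n : (1:ℝ) - n + 1 = 2 - n := by ring
  have hden : (2:ℝ) - n < 0 := by linarith
  have hRpos : (0:ℝ) < R ^ ((2:ℝ) - n) := Real.rpow_pos_of_pos hR0 _
  have hvle : (∫ s in Ioi R, s ^ ((1:ℝ) - n)) ≤ R ^ ((2:ℝ) - n) := by
    rw [hval, h2n]
    rw [div_le_iff_of_neg hden]
    have hd1 : (2:ℝ) - n ≤ -1 := by
      have : (3:ℝ) ≤ n := by exact_mod_cast hn
      linarith
    nlinarith [mul_nonneg (le_of_lt hRpos) (by linarith : (0:ℝ) ≤ -1 - (2 - (n:ℝ)))]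
  rw [abs_of_nonneg htail_nonneg, one_mul]
  linarith
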